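/- Let P be a rendez-vous protocol with no leader and let N ∈ ℕ be such that C_i^(N) →* C_f^(N) and C_i^(N+1) →* C_f^(N+1). Then for every n ≥ N², we have C_i^(n) →* C_f^(n). (In other words, N² is a cut-off for P.) -/
import Mathlib


/-- Actions labelling edges of a rendez-vous protocol: request (`recv`, written `?a`)
or answer (`send`, written `!a`). -/
inductive RVAct (A : Type) : Type
  | send : A → RVAct A
  | recv : A → RVAct A

/-- A rendez-vous protocol with no leader: a finite set of states `Q`, a finite
alphabet `A`, initial and final states, and a set of edges. -/
structure RVNProtocol (Q A : Type) : Type where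
  qi : Q
  qf : Q
  E : Set (Q × RVAct A × Q)

namespace RVNProtocol

variable {Q A : Type} [DecidableEq Q] (P : RVNProtocol Q A)

/-- One rendez-vous step between configurations (multisets of states). -/
def Step (C C' : Multiset Q) : Prop :=
  ∃ (a : A) (q1 q2 q1' q2' : Q),
    (q1, RVAct.recv a, q2) ∈ P.E ∧ (q1', RVAct.send a, q2') ∈ P.E ∧
    0 < C.count q1 ∧ 0 < C.count q1' ∧ 2 ≤ C.count q1 + C.count q1' ∧
    C' = C - {q1, q1'} + {q2, q2'}

/-- Reachability: reflexive-transitive closure of `Step`. -/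
def Reach : Multiset Q → Multiset Q → Prop := Relation.ReflTransGen P.Step

/-- The initial configuration with `n` processes: `n` copies of `q_i`. -/
def Ci (n : ℕ) : Multiset Q := Multiset.replicate n P.qi

/-- The final configuration with `n` processes: `n` copies of `q_f`. -/
def Cf (n : ℕ) : Multiset Q := Multiset.replicate n P.qf

end RVNProtocol


section Aux

variable {Q A : Type} [DecidableEq Q] (P : RVNProtocol Q A)

open RVNProtocol

lemma step_card_le {C D : Multiset Q} (h : P.Step C D) : C.card ≤ D.card := by
  obtain ⟨a, q1, q2, q1', q2', _, _, h1, h1', _, hD⟩ := h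
  subst hD
  have h2 : ((({q1, q1'} : Multiset Q)).card) = 2 := by simp
  have : C ≤ C - ({q1, q1'} : Multiset Q) + ({q1, q1'} : Multiset Q) := le_tsub_add
  have hle : C.card ≤ (C - {q1, q1'}).card + 2 := by
    calc C.card ≤ (C - {q1, q1'} + {q1, q1'}).card := Multiset.card_le_card this
    _ = (C - {q1, q1'}).card + 2 := by rw [Multiset.card_add, h2]
  simpa [Multiset.card_add] using hle

lemma step_add {C D E : Multiset Q} (h : P.Step C D) (hcard : C.card = D.card) :
    P.Step (C + E) (D + E) := by
  obtain ⟨a, q1, q2, q1', q2', he1, he2, h1, h1', hsum, hD⟩ := h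
  have hS : ({q1, q1'} : Multiset Q) ≤ C := by
    by_cases hq : q1 = q1'
    · subst hq
      by_cases h2 : 2 ≤ C.count q1
      · rw [Multiset.le_iff_count]
        intro q
        by_cases hqq : q = q1
        · subst hqq
          simpa [Multiset.count_cons, Multiset.count_singleton] using h2
        · simp [Multiset.count_cons, Multiset.count_singleton, hqq, Ne.symm hqq]
      · -- bad case: count q1 = 1, card grows, contradiction with hcard
        exfalso
        have hc1 : C.count q1 = 1 := by omega
        have hmem : q1 ∈ C := by rw [← Multiset.count_pos]; omega
        have hsub : C - {q1, q1} = (C.erase q1).erase q1 := by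
          show C - (q1 ::ₘ {q1}) = _
          rw [Multiset.sub_cons, Multiset.sub_singleton]
        have hnm : q1 ∉ C.erase q1 := by
          rw [← Multiset.count_pos, Multiset.count_erase_self]
          omega
        have hcardsub : (C - {q1, q1}).card = C.card - 1 := by
          rw [hsub, Multiset.erase_of_notMem hnm, Multiset.card_erase_of_mem hmem]
          exact Nat.pred_eq_sub_one
        have hcpos : 1 ≤ C.card := by
          calc 1 = ({q1} : Multiset Q).card := by simp
          _ ≤ C.card := Multiset.card_le_card (Multiset.singleton_le.mpr hmem)
        rw [hD] at hcard
        simp only [Multiset.card_add, hcardsub] at hcard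
        have : (({q2, q2'} : Multiset Q)).card = 2 := by simp
        omega
    · rw [Multiset.le_iff_count]
      intro q
      by_cases ha : q = q1 <;> by_cases hb : q = q1' <;>
        simp_all [Multiset.count_cons, Multiset.count_singleton] <;> omega
  refine ⟨a, q1, q2, q1', q2', he1, he2, ?_, ?_, ?_, ?_⟩
  · simp only [Multiset.count_add]; omega
  · simp only [Multiset.count_add]; omega
  · simp only [Multiset.count_add]; omega
  · have h3 : C + E - ({q1, q1'} : Multiset Q) = C - {q1, q1'} + E := by
      rw [tsub_add_eq_add_tsub hS]
    rw [hD, h3, add_right_comm]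

lemma reach_card_le {C D : Multiset Q} (h : P.Reach C D) : C.card ≤ D.card := by
  induction h with
  | refl => exact le_rfl
  | tail _ hstep ih => exact le_trans ih (step_card_le P hstep)

lemma reach_add {C D : Multiset Q} (h : P.Reach C D) (hcard : C.card = D.card)
    (E : Multiset Q) : P.Reach (C + E) (D + E) := by
  induction h using Relation.ReflTransGen.head_induction_on with
  | refl => exact Relation.ReflTransGen.refl
  | head hstep hrest ih =>
    rename_i C1 C2
    have h1 : C1.card ≤ C2.card := step_card_le P hstep
    have h2 : C2.card ≤ D.card := reach_card_le P hrest
    have heq : C1.card = C2.card := by omega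
    have heq2 : C2.card = D.card := by omega
    exact Relation.ReflTransGen.head (step_add P hstep heq) (ih heq2)

lemma reach_blocks (m : ℕ) (hm : P.Reach (P.Ci m) (P.Cf m)) (E F : Multiset Q)
    (hEF : P.Reach E F) (hcEF : E.card = F.card) :
    P.Reach (P.Ci m + E) (P.Cf m + F) := by
  have h1 : P.Reach (P.Ci m + E) (P.Cf m + E) := by
    apply reach_add P hm _ E
    simp [RVNProtocol.Ci, RVNProtocol.Cf]
  have h2 : P.Reach (E + P.Cf m) (F + P.Cf m) := reach_add P hEF hcEF _
  rw [add_comm E, add_comm F] at h2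
  exact h1.trans h2

end Aux

/-- If a rendez-vous protocol with no leader satisfies
`C_i^{(N)} →* C_f^{(N)}` and `C_i^{(N+1)} →* C_f^{(N+1)}`, then `N²` is a cut-off:
`C_i^{(n)} →* C_f^{(n)}` for every `n ≥ N²`. -/
theorem noleader_square_cutoff {Q A : Type} [Fintype Q] [Fintype A] [DecidableEq Q]
    (P : RVNProtocol Q A) (N : ℕ)
    (hN : P.Reach (P.Ci N) (P.Cf N)) (hN1 : P.Reach (P.Ci (N + 1)) (P.Cf (N + 1))) :
    ∀ n ≥ N ^ 2, P.Reach (P.Ci n) (P.Cf n) := by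
  have key : ∀ a b : ℕ, P.Reach (P.Ci (a * N + b * (N + 1))) (P.Cf (a * N + b * (N + 1))) := by
    intro a
    induction a with
    | zero =>
      intro b
      induction b with
      | zero => simp [RVNProtocol.Ci, RVNProtocol.Cf]; exact Relation.ReflTransGen.refl
      | succ k ih =>
        have hsplit : (k + 1) * (N + 1) = (N + 1) + k * (N + 1) := by ring
        simp only [Nat.zero_mul, Nat.zero_add] at *
        rw [hsplit]
        have : P.Ci ((N + 1) + k * (N + 1)) = P.Ci (N + 1) + P.Ci (k * (N + 1)) := by
          simp [RVNProtocol.Ci, Multiset.replicate_add]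
        have h2 : P.Cf ((N + 1) + k * (N + 1)) = P.Cf (N + 1) + P.Cf (k * (N + 1)) := by
          simp [RVNProtocol.Cf, Multiset.replicate_add]
        rw [this, h2]
        exact reach_blocks P (N + 1) hN1 _ _ ih (by simp [RVNProtocol.Ci, RVNProtocol.Cf])
    | succ k ih =>
      intro b
      have hsplit : (k + 1) * N + b * (N + 1) = N + (k * N + b * (N + 1)) := by ring
      rw [hsplit]
      have h1 : P.Ci (N + (k * N + b * (N + 1))) = P.Ci N + P.Ci (k * N + b * (N + 1)) := by
        simp [RVNProtocol.Ci, Multiset.replicate_add]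
      have h2 : P.Cf (N + (k * N + b * (N + 1))) = P.Cf N + P.Cf (k * N + b * (N + 1)) := by
        simp [RVNProtocol.Cf, Multiset.replicate_add]
      rw [h1, h2]
      exact reach_blocks P N hN _ _ (ih b) (by simp [RVNProtocol.Ci, RVNProtocol.Cf])
  intro n hn
  obtain ⟨a, b, hab⟩ : ∃ a b : ℕ, n = a * N + b * (N + 1) := by
    rcases Nat.eq_zero_or_pos N with h0 | hpos
    · exact ⟨0, n, by simp [h0]⟩
    · refine ⟨n / N - n % N, n % N, ?_⟩
      have hr : n % N < N := Nat.mod_lt _ hpos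
      have hq : N ≤ n / N := by
        rw [Nat.le_div_iff_mul_le hpos]
        calc N * N = N ^ 2 := by ring
        _ ≤ n := hn
      have := Nat.div_add_mod n N
      have hle : n % N ≤ n / N := le_trans (le_of_lt hr) hq
      have hqr : n = N * (n / N) + n % N := (Nat.div_add_mod n N).symm
      have hmul : (n / N - n % N) * N = (n / N) * N - (n % N) * N := Nat.sub_mul _ _ _
      have hmle : (n % N) * N ≤ (n / N) * N := Nat.mul_le_mul_right _ hle
      have hcomm : N * (n / N) = (n / N) * N := Nat.mul_comm _ _
      have hr1 : (n % N) * (N + 1) = (n % N) * N + n % N := by ring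
      omega
  rw [hab]
  exact key a b
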